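/- Fix an integer N ≥ 2, a real p with 0 < p < 1, q = 1 − p, and a strategy S. Then there exists exactly one function L : {0,…,N} → ℝ satisfying L(0) = 0, L(N) = 0, and L(i) = q·L(i − S(i)) + p·L(i + S(i)) + 1 for all 1 ≤ i ≤ N − 1. -/

import Mathlib

private lemma maxprin (N : ℕ) (hN : 2 ≤ N) (p q : ℝ)
    (hp0 : 0 < p) (hp1 : p < 1) (hq : q = 1 - p)
    (S : ℕ → ℕ)
    (hS : ∀ i : ℕ, 1 ≤ i → i ≤ N - 1 → 1 ≤ S i ∧ S i ≤ min i (N - i))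
    (D : ℕ → ℝ) (h0 : D 0 = 0) (hNv : D N = 0)
    (hrec : ∀ i : ℕ, 1 ≤ i → i ≤ N - 1 → D i = q * D (i - S i) + p * D (i + S i)) :
    ∀ i ≤ N, D i ≤ 0 := by
  have hq0 : 0 < q := by rw [hq]; linarith
  have hne : (Finset.range (N+1)).Nonempty := ⟨0, by simp⟩
  set M := (Finset.range (N+1)).sup' hne D with hM
  have hle : ∀ i ≤ N, D i ≤ M := fun i hi =>
    Finset.le_sup' D (Finset.mem_range.mpr (by omega))
  have key : ∀ k : ℕ, ∀ i ≤ N, N - i ≤ k → D i = M → M = 0 := by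
    intro k
    induction k with
    | zero =>
      intro i hi hk hD
      have hiN : i = N := by omega
      rw [hiN, hNv] at hD
      exact hD.symm
    | succ k ih =>
      intro i hi hk hD
      by_cases h1 : 1 ≤ i ∧ i ≤ N - 1
      · obtain ⟨hs1, hs2⟩ := hS i h1.1 h1.2
        have hiS : i + S i ≤ N := by omega
        have hA : D (i - S i) ≤ M := hle _ (by omega)
        have hB : D (i + S i) ≤ M := hle _ hiS
        have heq := hrec i h1.1 h1.2
        have hBM : M ≤ D (i + S i) := by
          by_contra hlt
          push_neg at hlt
          have hm1 : q * D (i - S i) ≤ q * M := mul_le_mul_of_nonneg_left hA hq0.le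
          have hm2 : p * D (i + S i) < p * M := mul_lt_mul_of_pos_left hlt hp0
          have hsum : q * M + p * M = M := by rw [hq]; ring
          linarith
        have hDB : D (i + S i) = M := le_antisymm hB hBM
        exact ih (i + S i) hiS (by omega) hDB
      · have h2 : i = 0 ∨ i = N := by omega
        rcases h2 with h | h
        · rw [h, h0] at hD; exact hD.symm
        · rw [h, hNv] at hD; exact hD.symm
  obtain ⟨i₀, hi₀, hMi⟩ := Finset.exists_mem_eq_sup' hne D
  have hi₀N : i₀ ≤ N := by have := Finset.mem_range.mp hi₀; omega
  have hM0 : M = 0 := key N i₀ hi₀N (by omega) hMi.symm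
  intro i hi
  calc D i ≤ M := hle i hi
    _ = 0 := hM0

private lemma zeroprin (N : ℕ) (hN : 2 ≤ N) (p q : ℝ)
    (hp0 : 0 < p) (hp1 : p < 1) (hq : q = 1 - p)
    (S : ℕ → ℕ)
    (hS : ∀ i : ℕ, 1 ≤ i → i ≤ N - 1 → 1 ≤ S i ∧ S i ≤ min i (N - i))
    (D : ℕ → ℝ) (h0 : D 0 = 0) (hNv : D N = 0)
    (hrec : ∀ i : ℕ, 1 ≤ i → i ≤ N - 1 → D i = q * D (i - S i) + p * D (i + S i)) :
    ∀ i ≤ N, D i = 0 := by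
  have hup := maxprin N hN p q hp0 hp1 hq S hS D h0 hNv hrec
  have hdown := maxprin N hN p q hp0 hp1 hq S hS (fun n => -D n)
    (by simp [h0]) (by simp [hNv])
    (fun i h1 h2 => by have := hrec i h1 h2; linarith)
  intro i hi
  have := hup i hi
  have := hdown i hi
  linarith

private def fmap (N : ℕ) (p q : ℝ) (S : ℕ → ℕ) :
    (Fin (N+1) → ℝ) →ₗ[ℝ] (Fin (N+1) → ℝ) where
  toFun L i :=
    if 1 ≤ (i : ℕ) ∧ (i : ℕ) ≤ N - 1 then
      L i - q * (if h : (i : ℕ) - S i < N + 1 then L ⟨(i : ℕ) - S i, h⟩ else 0)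
          - p * (if h : (i : ℕ) + S i < N + 1 then L ⟨(i : ℕ) + S i, h⟩ else 0)
    else L i
  map_add' L₁ L₂ := by
    funext i
    simp only [Pi.add_apply]
    split_ifs <;> ring
  map_smul' c L := by
    funext i
    simp only [Pi.smul_apply, smul_eq_mul, RingHom.id_apply]
    split_ifs <;> ring

theorem expected_duration_system_exists_unique
    (N : ℕ) (hN : 2 ≤ N) (p q : ℝ)
    (hp0 : 0 < p) (hp1 : p < 1) (hq : q = 1 - p)
    (S : ℕ → ℕ)
    (hS : ∀ i : ℕ, 1 ≤ i → i ≤ N - 1 → 1 ≤ S i ∧ S i ≤ min i (N - i)) :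
    (∃ L : ℕ → ℝ, L 0 = 0 ∧ L N = 0 ∧
        ∀ i : ℕ, 1 ≤ i → i ≤ N - 1 →
          L i = q * L (i - S i) + p * L (i + S i) + 1) ∧
    (∀ L₁ L₂ : ℕ → ℝ,
        (L₁ 0 = 0 ∧ L₁ N = 0 ∧
          ∀ i : ℕ, 1 ≤ i → i ≤ N - 1 →
            L₁ i = q * L₁ (i - S i) + p * L₁ (i + S i) + 1) →
        (L₂ 0 = 0 ∧ L₂ N = 0 ∧
          ∀ i : ℕ, 1 ≤ i → i ≤ N - 1 →
            L₂ i = q * L₂ (i - S i) + p * L₂ (i + S i) + 1) →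
        ∀ i : ℕ, i ≤ N → L₁ i = L₂ i) := by
  constructor
  · -- Existence via injectivity → surjectivity of fmap
    have hinj : Function.Injective (fmap N p q S) := by
      rw [← LinearMap.ker_eq_bot, LinearMap.ker_eq_bot']
      intro L hL
      set D : ℕ → ℝ := fun n => if h : n < N + 1 then L ⟨n, h⟩ else 0 with hD
      have hcomp : ∀ i : Fin (N+1), (fmap N p q S) L i = 0 := fun i => congrFun hL i
      have hD0 : D 0 = 0 := by
        have h := hcomp ⟨0, by omega⟩
        simp only [fmap, LinearMap.coe_mk, AddHom.coe_mk] at h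
        rw [if_neg (by omega)] at h
        simp only [hD]
        rw [dif_pos (by omega : (0:ℕ) < N+1)]
        exact h
      have hDN : D N = 0 := by
        have h := hcomp ⟨N, by omega⟩
        simp only [fmap, LinearMap.coe_mk, AddHom.coe_mk] at h
        rw [if_neg (by omega)] at h
        simp only [hD]
        rw [dif_pos (by omega : N < N+1)]
        exact h
      have hDrec : ∀ i : ℕ, 1 ≤ i → i ≤ N - 1 →
          D i = q * D (i - S i) + p * D (i + S i) := by
        intro i h1 h2
        obtain ⟨hs1, hs2⟩ := hS i h1 h2
        have hi : i < N + 1 := by omega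
        have him : i - S i < N + 1 := by omega
        have hip : i + S i < N + 1 := by omega
        have := hcomp ⟨i, hi⟩
        simp only [fmap, LinearMap.coe_mk, AddHom.coe_mk] at this
        rw [if_pos (by constructor <;> omega), dif_pos him, dif_pos hip] at this
        simp only [hD, dif_pos hi, dif_pos him, dif_pos hip]
        linarith
      have hzero := zeroprin N hN p q hp0 hp1 hq S hS D hD0 hDN hDrec
      funext j
      have := hzero j (by omega)
      simpa [hD, j.isLt, Nat.lt_succ_iff.mp j.isLt] using this
    have hsurj : Function.Surjective (fmap N p q S) :=
      (LinearMap.injective_iff_surjective).mp hinj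
    obtain ⟨L, hL⟩ := hsurj (fun i => if 1 ≤ (i : ℕ) ∧ (i : ℕ) ≤ N - 1 then (1 : ℝ) else 0)
    set Lf : ℕ → ℝ := fun n => if h : n < N + 1 then L ⟨n, h⟩ else 0 with hLf
    have hcomp : ∀ i : Fin (N+1), (fmap N p q S) L i =
        (if 1 ≤ (i : ℕ) ∧ (i : ℕ) ≤ N - 1 then (1 : ℝ) else 0) := fun i => congrFun hL i
    refine ⟨Lf, ?_, ?_, ?_⟩
    · have h := hcomp ⟨0, by omega⟩
      simp only [fmap, LinearMap.coe_mk, AddHom.coe_mk] at h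
      rw [if_neg (by omega), if_neg (by omega)] at h
      simp only [hLf]
      rw [dif_pos (by omega : (0:ℕ) < N+1)]
      exact h
    · have h := hcomp ⟨N, by omega⟩
      simp only [fmap, LinearMap.coe_mk, AddHom.coe_mk] at h
      rw [if_neg (by omega), if_neg (by omega)] at h
      simp only [hLf]
      rw [dif_pos (by omega : N < N+1)]
      exact h
    · intro i h1 h2
      obtain ⟨hs1, hs2⟩ := hS i h1 h2
      have hi : i < N + 1 := by omega
      have him : i - S i < N + 1 := by omega
      have hip : i + S i < N + 1 := by omega
      have := hcomp ⟨i, hi⟩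
      simp only [fmap, LinearMap.coe_mk, AddHom.coe_mk] at this
      rw [if_pos (by constructor <;> omega), if_pos (by constructor <;> omega),
        dif_pos him, dif_pos hip] at this
      simp only [hLf, dif_pos hi, dif_pos him, dif_pos hip]
      linarith
  · -- Uniqueness via the maximum principle
    rintro L₁ L₂ ⟨h10, h1N, h1rec⟩ ⟨h20, h2N, h2rec⟩
    have hrec : ∀ i : ℕ, 1 ≤ i → i ≤ N - 1 →
        (L₁ - L₂) i = q * (L₁ - L₂) (i - S i) + p * (L₁ - L₂) (i + S i) := by
      intro i ha hb
      have e1 := h1rec i ha hb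
      have e2 := h2rec i ha hb
      simp only [Pi.sub_apply]
      linarith
    have hzero := zeroprin N hN p q hp0 hp1 hq S hS (L₁ - L₂)
      (by simp [h10, h20]) (by simp [h1N, h2N]) hrec
    intro i hi
    have := hzero i hi
    simp only [Pi.sub_apply] at this
    linarith
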